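/- Let n = 2^m with m ≥ 2, let P = (C_l)_{l∈L} be a family of pairwise disjoint extended perfect binary codes of length n whose union is the set of all odd-weight words of F_2^n, let π be a permutation of the index set L, and let D_P = ∪_{l∈L} C_l × C_{π(l)} ⊆ F_2^n × F_2^n be the corresponding Solov'eva code of length 2n (with distance d((X,Y),(X',Y')) = d(X,X') + d(Y,Y')). Let (X,Y) ∈ C_k × C_{π(k)}, let i ≠ j be two coordinates of the first block, and let l ∈ L be the index with X + e_i + e_j ∈ C_l. Then N_{ij}(D_P,(X,Y)) = (N_{ij}(C_k,X) × {Y}) ∪ {(X + e_i + e_j, Z) : Z ∈ C_{π(l)}, d(Z,Y) = 2}. -/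

import Mathlib

/-- `C` is an extended perfect binary code of length `n = 2^m`:
`|C| = 2^n / (2n)`, all codewords have the same weight parity,
and distinct codewords are at Hamming distance at least 4. -/
def IsExtendedPerfectCode (n : ℕ) (C : Set (Fin n → ZMod 2)) : Prop :=
  C.ncard = 2 ^ n / (2 * n) ∧
  (∀ c ∈ C, ∀ c' ∈ C, hammingNorm c % 2 = hammingNorm c' % 2) ∧
  (∀ c ∈ C, ∀ c' ∈ C, c ≠ c' → 4 ≤ hammingDist c c')

/-- The unit vector `e i`. -/
def unitVec (n : ℕ) (i : Fin n) : Fin n → ZMod 2 := Pi.single i 1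

/-- `ij`-adjacent codewords of a code `C` of length `n`: at Hamming distance 4,
differing in both coordinates `i` and `j`. -/
def Nset (n : ℕ) (C : Set (Fin n → ZMod 2)) (i j : Fin n) (X : Fin n → ZMod 2) :
    Set (Fin n → ZMod 2) :=
  {Z ∈ C | hammingDist X Z = 4 ∧ Z i ≠ X i ∧ Z j ≠ X j}

/-- The Solov'eva code `D_P = ∪_l C_l × C_{π(l)}`. -/
def SolovevaCode {L : Type*} (n : ℕ) (C : L → Set (Fin n → ZMod 2)) (π : Equiv.Perm L) :
    Set ((Fin n → ZMod 2) × (Fin n → ZMod 2)) :=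
  ⋃ l, (C l) ×ˢ (C (π l))

/-- `ij`-adjacent codewords of the pair code `D` (with `i`,`j` coordinates of the
first block): at distance 4 (sum of the two Hamming distances) and differing from the
given codeword in both coordinates `i` and `j` of the first block. -/
def NsetPair (n : ℕ) (D : Set ((Fin n → ZMod 2) × (Fin n → ZMod 2))) (i j : Fin n)
    (c : (Fin n → ZMod 2) × (Fin n → ZMod 2)) :
    Set ((Fin n → ZMod 2) × (Fin n → ZMod 2)) :=
  {c' ∈ D | hammingDist c.1 c'.1 + hammingDist c.2 c'.2 = 4 ∧
    c'.1 i ≠ c.1 i ∧ c'.1 j ≠ c.1 j}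

lemma zmod2_ne_iff {a b : ZMod 2} : a ≠ b ↔ a = b + 1 := by revert a b; decide

lemma cast_hammingNorm {n : ℕ} (v : Fin n → ZMod 2) :
    (hammingNorm v : ZMod 2) = ∑ t, v t := by
  unfold hammingNorm
  rw [← Finset.sum_filter_of_ne (p := fun t => v t ≠ 0) (fun t _ h => h)]
  rw [Finset.sum_congr rfl (fun t ht => show v t = 1 by
    have h := (Finset.mem_filter.mp ht).2
    revert h; generalize v t = a; revert a; decide)]
  simp

lemma dist_even {n : ℕ} {X Z : Fin n → ZMod 2} (hX : Odd (hammingNorm X))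
    (hZ : Odd (hammingNorm Z)) : hammingDist X Z % 2 = 0 := by
  have h0 : hammingDist X Z = hammingNorm (X - Z) := by
    rw [hammingDist_eq_hammingNorm]; congr 1; funext t
    simp only [Pi.add_apply, Pi.neg_apply, Pi.sub_apply]
    generalize X t = a; generalize Z t = b; revert a b; decide
  have h1 : ((hammingDist X Z : ℕ) : ZMod 2) = 0 := by
    rw [h0, cast_hammingNorm]
    have h2 : ∑ t, (X - Z) t = (∑ t, X t) - ∑ t, Z t := by
      simp [Finset.sum_sub_distrib]
    rw [h2, ← cast_hammingNorm, ← cast_hammingNorm]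
    rw [Nat.odd_iff] at hX hZ
    rw [← Nat.mod_add_div (hammingNorm X) 2, ← Nat.mod_add_div (hammingNorm Z) 2, hX, hZ]
    push_cast
    ring_nf
    simp [show ((2:ZMod 2)) = 0 from rfl]
  have := (ZMod.natCast_eq_zero_iff _ 2).mp h1
  omega

lemma unitVec_apply {n : ℕ} (i t : Fin n) : unitVec n i t = if t = i then 1 else 0 := by
  unfold unitVec
  by_cases h : t = i
  · subst h; simp
  · simp [h, Pi.single_eq_of_ne h]

lemma two_le_dist {n : ℕ} {X Z : Fin n → ZMod 2} {i j : Fin n} (hij : i ≠ j)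
    (hi : Z i ≠ X i) (hj : Z j ≠ X j) : 2 ≤ hammingDist X Z := by
  have hsub : ({i, j} : Finset (Fin n)) ⊆ Finset.univ.filter (fun t => X t ≠ Z t) := by
    intro t ht
    simp only [Finset.mem_insert, Finset.mem_singleton] at ht
    rcases ht with rfl | rfl <;> simp [Ne.symm hi, Ne.symm hj]
  have hcard : ({i, j} : Finset (Fin n)).card = 2 := by
    rw [Finset.card_insert_of_notMem (by simpa using hij), Finset.card_singleton]
  calc 2 = ({i, j} : Finset (Fin n)).card := hcard.symm
    _ ≤ _ := Finset.card_le_card hsub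

lemma eq_add_units {n : ℕ} {X Z : Fin n → ZMod 2} {i j : Fin n} (hij : i ≠ j)
    (hd : hammingDist X Z = 2) (hi : Z i ≠ X i) (hj : Z j ≠ X j) :
    Z = X + unitVec n i + unitVec n j := by
  have hsub : ({i, j} : Finset (Fin n)) ⊆ Finset.univ.filter (fun t => X t ≠ Z t) := by
    intro t ht
    simp only [Finset.mem_insert, Finset.mem_singleton] at ht
    rcases ht with rfl | rfl <;> simp [Ne.symm hi, Ne.symm hj]
  have hcard : ({i, j} : Finset (Fin n)).card = 2 := by
    rw [Finset.card_insert_of_notMem (by simpa using hij), Finset.card_singleton]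
  have heq : Finset.univ.filter (fun t => X t ≠ Z t) = {i, j} :=
    (Finset.eq_of_subset_of_card_le hsub (by rw [hcard]; exact le_of_eq hd)).symm
  funext t
  have hmem : X t ≠ Z t ↔ (t = i ∨ t = j) := by
    constructor
    · intro h
      have : t ∈ Finset.univ.filter (fun t => X t ≠ Z t) := by simp [h]
      rw [heq] at this; simpa using this
    · intro h
      rcases h with rfl | rfl
      exacts [Ne.symm hi, Ne.symm hj]
  simp only [Pi.add_apply, unitVec_apply]
  by_cases hti : t = i
  · subst hti
    rw [if_pos rfl, if_neg hij, add_zero, zmod2_ne_iff.mp hi]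
  · by_cases htj : t = j
    · subst htj
      rw [if_neg hti, if_pos rfl, zmod2_ne_iff.mp hj]; ring
    · rw [if_neg hti, if_neg htj, add_zero, add_zero]
      by_contra h
      exact (hti ((hmem.mp (Ne.symm h)).resolve_right htj)).elim

lemma dist_add_units {n : ℕ} (X : Fin n → ZMod 2) {i j : Fin n} (hij : i ≠ j) :
    hammingDist X (X + unitVec n i + unitVec n j) = 2 := by
  have heq : Finset.univ.filter (fun t => X t ≠ (X + unitVec n i + unitVec n j) t)
      = {i, j} := by
    ext t
    simp only [Finset.mem_filter, Finset.mem_univ, true_and, Pi.add_apply, unitVec_apply,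
      Finset.mem_insert, Finset.mem_singleton]
    by_cases hti : t = i
    · subst hti; simp [if_neg hij]
    · by_cases htj : t = j
      · subst htj; simp [hti]
      · simp [hti, htj]
  show (Finset.univ.filter _).card = 2
  rw [heq, Finset.card_insert_of_notMem (by simpa using hij), Finset.card_singleton]

theorem stmt_4 {L : Type*} (m n : ℕ) (hm : 2 ≤ m) (hn : n = 2 ^ m)
    (C : L → Set (Fin n → ZMod 2))
    (hperf : ∀ l, IsExtendedPerfectCode n (C l))
    (hdisj : ∀ l l', l ≠ l' → Disjoint (C l) (C l'))
    (hunion : (⋃ l, C l) = {v | Odd (hammingNorm v)})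
    (π : Equiv.Perm L) (k l : L)
    (X Y : Fin n → ZMod 2) (hX : X ∈ C k) (hY : Y ∈ C (π k))
    (i j : Fin n) (hij : i ≠ j)
    (hl : X + unitVec n i + unitVec n j ∈ C l) :
    NsetPair n (SolovevaCode n C π) i j (X, Y) =
      ((fun Z => (Z, Y)) '' Nset n (C k) i j X) ∪
      {p | p.1 = X + unitVec n i + unitVec n j ∧ p.2 ∈ C (π l) ∧ hammingDist p.2 Y = 2} := by
  have hodd : ∀ (t : L) (v : Fin n → ZMod 2), v ∈ C t → Odd (hammingNorm v) := by
    intro t v hv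
    have hv' : v ∈ ⋃ l, C l := Set.mem_iUnion.mpr ⟨t, hv⟩
    rw [hunion] at hv'; exact hv'
  ext ⟨Z, W⟩
  constructor
  · rintro ⟨hD, hd4, hi, hj⟩
    simp only [SolovevaCode, Set.mem_iUnion, Set.mem_prod] at hD
    obtain ⟨t, hZ, hW⟩ := hD
    simp only at hd4 hi hj
    have hXZeven := dist_even (hodd k X hX) (hodd t Z hZ)
    have hYWeven := dist_even (hodd (π k) Y hY) (hodd (π t) W hW)
    have h2le := two_le_dist hij hi hj
    have hcase : hammingDist X Z = 2 ∨ hammingDist X Z = 4 := by omega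
    rcases hcase with h2 | h4
    · have hZeq := eq_add_units hij h2 hi hj
      have hZl : Z ∈ C l := by rw [hZeq]; exact hl
      have htl : t = l := by
        by_contra hne
        exact Set.disjoint_left.mp (hdisj t l hne) hZ hZl
      right
      refine ⟨hZeq, ?_, ?_⟩
      · rw [← htl]; exact hW
      · show hammingDist W Y = 2
        rw [hammingDist_comm]; omega
    · have hWY : W = Y := by
        have h0 : hammingDist Y W = 0 := by omega
        exact (hammingDist_eq_zero.mp h0).symm
      have htk : t = k := by
        by_contra hne
        have hne' : π t ≠ π k := fun h => hne (π.injective h)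
        have hWk : W ∈ C (π k) := by rw [hWY]; exact hY
        exact Set.disjoint_left.mp (hdisj _ _ hne') hW hWk
      left
      exact ⟨Z, ⟨htk ▸ hZ, h4, hi, hj⟩, by rw [hWY]⟩
  · rintro (⟨Z', ⟨hZ'C, hd, hi', hj'⟩, heq⟩ | ⟨h1, h2, h3⟩)
    · have hZeq : Z' = Z := congrArg Prod.fst heq
      have hWeq : Y = W := congrArg Prod.snd heq
      subst hZeq; subst hWeq
      refine ⟨?_, ?_, ?_, ?_⟩
      · exact Set.mem_iUnion.mpr ⟨k, Set.mk_mem_prod hZ'C hY⟩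
      · simp [hd]
      · exact hi'
      · exact hj'
    · simp only at h1 h2 h3
      have hZi : Z i = X i + 1 := by
        rw [h1]
        simp [unitVec_apply, hij]
      have hZj : Z j = X j + 1 := by
        rw [h1]
        simp [unitVec_apply, Ne.symm hij]
      refine ⟨?_, ?_, ?_, ?_⟩
      · refine Set.mem_iUnion.mpr ⟨l, Set.mk_mem_prod ?_ h2⟩
        rw [h1]; exact hl
      · show hammingDist X Z + hammingDist Y W = 4
        rw [h1, dist_add_units X hij, hammingDist_comm, h3]
      · exact zmod2_ne_iff.mpr hZi
      · exact zmod2_ne_iff.mpr hZj
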